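/- Let C and D be reflexive digraph cycles with D non-contractible. Then the wind of homomorphisms is constant over connected components of Hom(C,D): if φ and ψ lie in the same connected component of Hom(C,D), then w(φ) = w(ψ). -/
import Mathlib


open scoped Classical

namespace Recon

/-- Orientation letters for edges of a digraph cycle: `+`, `-`, `*`. -/
inductive Orient : Type
  | plus
  | minus
  | star
deriving DecidableEq

/-- A forward arc is allowed along an edge with this orientation letter. -/
def Orient.fwd : Orient → Prop
  | Orient.plus => True
  | Orient.minus => False
  | Orient.star => True

/-- A backward arc is allowed along an edge with this orientation letter. -/
def Orient.bwd : Orient → Prop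
  | Orient.plus => False
  | Orient.minus => True
  | Orient.star => True

/-- The arc relation of the reflexive digraph cycle on `ZMod m` whose orientation
string is `f`, where `f c` is the orientation of the edge from `c` to `c + 1`. -/
def cycRel {m : ℕ} (f : ZMod m → Orient) (u v : ZMod m) : Prop :=
  u = v ∨ (v = u + 1 ∧ (f u).fwd) ∨ (u = v + 1 ∧ (f v).bwd)

/-- `φ` is a digraph homomorphism. -/
def IsHom {α β : Type*} (rG : α → α → Prop) (rH : β → β → Prop) (φ : α → β) : Prop :=
  ∀ u v, rG u v → rH (φ u) (φ v)

/-- The arc relation of the Hom-graph `Hom(G,H)`. -/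
def HomArc {α β : Type*} (rG : α → α → Prop) (rH : β → β → Prop) (φ ψ : α → β) : Prop :=
  ∀ u v, rG u v → rH (φ u) (ψ v)

/-- `φψ` is an edge of the Hom-graph. -/
def HomEdge {α β : Type*} (rG : α → α → Prop) (rH : β → β → Prop) (φ ψ : α → β) : Prop :=
  HomArc rG rH φ ψ ∨ HomArc rG rH ψ φ

/-- The contribution of the edge `c (c+1)` of `C` to the increase of `φ`:
`1` if increasing, `-1` if decreasing, `0` if stationary. -/
def edgeVal {m n : ℕ} (φ : ZMod m → ZMod n) (c : ZMod m) : ℤ :=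
  if φ (c + 1) = φ c + 1 then 1 else if φ (c + 1) = φ c - 1 then -1 else 0

/-- The increase of a map between cycles: #increasing − #decreasing edges. -/
def increase {m n : ℕ} (φ : ZMod m → ZMod n) : ℤ :=
  ∑ j ∈ Finset.range m, edgeVal φ ((j : ℕ) : ZMod m)

/-- The increase of the subpath `c_a … c_{a+L}`. -/
def partialInc {m n : ℕ} (φ : ZMod m → ZMod n) (a : ZMod m) (L : ℕ) : ℤ :=
  ∑ j ∈ Finset.range L, edgeVal φ (a + ((j : ℕ) : ZMod m))

/-- `φ` has wind `w`, i.e. its increase is `w * n`. -/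
def HasWind {m n : ℕ} (φ : ZMod m → ZMod n) (w : ℤ) : Prop :=
  increase φ = w * (n : ℤ)

/-- A reflexive digraph cycle is non-contractible if it has length at least 4
or is a directed 3-cycle. -/
def NonContractible {n : ℕ} (f : ZMod n → Orient) : Prop :=
  4 ≤ n ∨ (n = 3 ∧ ((∀ i, f i = Orient.plus) ∨ (∀ i, f i = Orient.minus)))

/-- `φ` is increasing: every edge increasing or stationary, not all stationary. -/
def IncMap {m n : ℕ} (φ : ZMod m → ZMod n) : Prop :=
  (∀ c, φ (c + 1) = φ c + 1 ∨ φ (c + 1) = φ c) ∧ ∃ c, φ (c + 1) = φ c + 1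

/-- `φ` is decreasing: every edge decreasing. -/
def DecMap {m n : ℕ} (φ : ZMod m → ZMod n) : Prop :=
  ∀ c, φ (c + 1) = φ c - 1

/-- `φ` is monotone: increasing or decreasing. -/
def MonMap {m n : ℕ} (φ : ZMod m → ZMod n) : Prop :=
  IncMap φ ∨ DecMap φ

/-- `φ` is monotone in the weak sense where constant maps also count. -/
def MonOrConst {m n : ℕ} (φ : ZMod m → ZMod n) : Prop :=
  (∀ c, φ (c + 1) = φ c + 1 ∨ φ (c + 1) = φ c) ∨ DecMap φ

/-- `Y ≤* X`: `Y` is a `*`-substring of `X`, via a strictly increasing selection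
function `α` with `Y i = X (α i)` unless `Y i = *`. -/
def StarSub {p q : ℕ} (Y : Fin p → Orient) (X : Fin q → Orient) : Prop :=
  ∃ α : Fin p → Fin q, StrictMono α ∧ ∀ i, Y i = X (α i) ∨ Y i = Orient.star

/-- The orientation string of the (pointed) cycle `f`. -/
def cycStr {m : ℕ} (f : ZMod m → Orient) : Fin m → Orient :=
  fun j => f ((j : ℕ) : ZMod m)

/-- The orientation string `σ^i(Y^k)` = `(σ^i Y)^k`: the `i`-th shift of the
`k`-fold concatenation of the string of the cycle `fY`. -/
def shiftPowStr {s : ℕ} (fY : ZMod s → Orient) (k : ℕ) (i : ZMod s) :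
    Fin (k * s) → Orient :=
  fun j => fY (i + ((j : ℕ) : ZMod s))

/-- The orientation string `σ^i(Y)^k y_{i+1}` : the `i`-th shift of the `k`-fold
concatenation of the string of `fY`, extended by its own first letter. -/
def shiftPowExtStr {s : ℕ} (fY : ZMod s → Orient) (k : ℕ) (i : ZMod s) :
    Fin (k * s + 1) → Orient :=
  fun j => fY (i + ((j : ℕ) : ZMod s))

/-- Every vertex that moves from `φ` to `ψ`, moves up. -/
def MovesUpOnly {m n : ℕ} (φ ψ : ZMod m → ZMod n) : Prop :=
  ∀ c, ψ c = φ c ∨ ψ c = φ c + 1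

/-- Every vertex that moves from `φ` to `ψ`, moves down. -/
def MovesDownOnly {m n : ℕ} (φ ψ : ZMod m → ZMod n) : Prop :=
  ∀ c, ψ c = φ c ∨ ψ c = φ c - 1

/-- `φψ` is an up edge of the Hom-graph. -/
def UpEdge {m n : ℕ} (rC : ZMod m → ZMod m → Prop) (rD : ZMod n → ZMod n → Prop)
    (φ ψ : ZMod m → ZMod n) : Prop :=
  HomEdge rC rD φ ψ ∧ MovesUpOnly φ ψ

/-- `φ` and `ψ` are joined by a path (walk) inside the induced subgraph on `S`. -/
def ConnIn {m n : ℕ} (rC : ZMod m → ZMod m → Prop) (rD : ZMod n → ZMod n → Prop)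
    (S : Set (ZMod m → ZMod n)) (φ ψ : ZMod m → ZMod n) : Prop :=
  Relation.ReflTransGen (fun a b => a ∈ S ∧ b ∈ S ∧ HomEdge rC rD a b) φ ψ

/-- `ψ` is reachable from `φ` by a path of up edges inside `S`. -/
def UpReachIn {m n : ℕ} (rC : ZMod m → ZMod m → Prop) (rD : ZMod n → ZMod n → Prop)
    (S : Set (ZMod m → ZMod n)) (φ ψ : ZMod m → ZMod n) : Prop :=
  Relation.ReflTransGen (fun a b => a ∈ S ∧ b ∈ S ∧ UpEdge rC rD a b) φ ψ

/-- One step of a path of up edges between homomorphisms. -/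
def UpStep {m n : ℕ} (rC : ZMod m → ZMod m → Prop) (rD : ZMod n → ZMod n → Prop)
    (φ ψ : ZMod m → ZMod n) : Prop :=
  IsHom rC rD φ ∧ IsHom rC rD ψ ∧ UpEdge rC rD φ ψ

/-- The set of vertices on which `φ` and `φ'` differ. -/
def Neq {α β : Type*} (φ φ' : α → β) : Set α := {g | φ g ≠ φ' g}

/-- The map `φ_T`, agreeing with `φ'` on `T` and with `φ` elsewhere. -/
noncomputable def refineMap {α β : Type*} (φ φ' : α → β) (T : Set α) : α → β :=
  fun g => if g ∈ T then φ' g else φ g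

/-- The edge `φφ'` is non-refinable: no nonempty proper subset `T` of `Neq φ φ'`
yields a homomorphism `φ_T`. -/
def NonRefinable {α β : Type*} (rG : α → α → Prop) (rH : β → β → Prop)
    (φ φ' : α → β) : Prop :=
  ¬ ∃ T : Set α, T.Nonempty ∧ T ⊂ Neq φ φ' ∧ IsHom rG rH (refineMap φ φ' T)

/-- `T` is a strong component of the digraph `r`. -/
def IsStrongComponent {α : Type*} (r : α → α → Prop) (T : Set α) : Prop :=
  T.Nonempty ∧ (∀ u ∈ T, ∀ v ∈ T, Relation.ReflTransGen r u v) ∧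
    ∀ T' : Set α, T ⊆ T' → (∀ u ∈ T', ∀ v ∈ T', Relation.ReflTransGen r u v) → T' = T

/-- `T` has no arcs out to vertices not in `T`. -/
def IsTerminal {α : Type*} (r : α → α → Prop) (T : Set α) : Prop :=
  ∀ u ∈ T, ∀ v, r u v → v ∈ T

/-- `Mon_1(C,D;i)`: monotone wind-1 homomorphisms `φ` with `φ c₀ = i`. -/
def Mon1 {m n : ℕ} (fC : ZMod m → Orient) (fD : ZMod n → Orient) (i : ZMod n) :
    Set (ZMod m → ZMod n) :=
  {φ | IsHom (cycRel fC) (cycRel fD) φ ∧ MonMap φ ∧ increase φ = (n : ℤ) ∧ φ 0 = i}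

/-- A one-step up edge: an edge from `φ` obtained by moving all the vertices of a
subpath of `C` mapped to a single vertex `d` up to `d + 1`. -/
def OneStepUp {m n : ℕ} (rC : ZMod m → ZMod m → Prop) (rD : ZMod n → ZMod n → Prop)
    (φ φ' : ZMod m → ZMod n) : Prop :=
  HomEdge rC rD φ φ' ∧
    ∃ (a : ZMod m) (k : ℕ) (d : ZMod n), k < m ∧
      (∀ j : ℕ, j ≤ k → φ (a + ((j : ℕ) : ZMod m)) = d) ∧
      ∀ c, φ' c = if ∃ j : ℕ, j ≤ k ∧ c = a + ((j : ℕ) : ZMod m) then d + 1 else φ c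

/-- The number of increasing edges of `φ` among the first `j` edges of `C`. -/
def incBefore {m n : ℕ} (φ : ZMod m → ZMod n) (j : ℕ) : ℕ :=
  ((Finset.range j).filter fun t =>
    φ (((t : ℕ) : ZMod m) + 1) = φ ((t : ℕ) : ZMod m) + 1).card

/-- One cutback-pushing step: `φ'` is obtained from `φ` by replacing the values of
`φ` on a cutback `c_a … c_{a+L}` by `φ a`. -/
def CutbackStep {m n : ℕ} (φ φ' : ZMod m → ZMod n) : Prop :=
  ∃ (a : ZMod m) (L : ℕ), L < m ∧ partialInc φ a L = 0 ∧
    (∀ j : ℕ, 0 < j → j < L → partialInc φ a j < 0) ∧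
    ∀ c, φ' c = if ∃ j : ℕ, j ≤ L ∧ c = a + ((j : ℕ) : ZMod m) then φ a else φ c

/-- `Mon_1^+(C,D;i)`: wind-1 homomorphisms whose monotone push-up is in `Mon_1(C,D;i)`. -/
def Mon1Plus {m n : ℕ} (fC : ZMod m → Orient) (fD : ZMod n → Orient) (i : ZMod n) :
    Set (ZMod m → ZMod n) :=
  {φ | IsHom (cycRel fC) (cycRel fD) φ ∧ increase φ = (n : ℤ) ∧
    ∃ ψ ∈ Mon1 fC fD i, Relation.ReflTransGen CutbackStep φ ψ}

def nu {n : ℕ} (x : ZMod n) : ℤ := if x = 1 then 1 else if x = -1 then -1 else 0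

lemma zcast_inj {n : ℕ} (hn : 0 < n) {a b : ℤ} (h : (a : ZMod n) = (b : ZMod n))
    (hab : |a - b| < (n:ℤ)) : a = b := by
  have hd : (n:ℤ) ∣ (a - b) := by
    have h0 : ((a - b : ℤ) : ZMod n) = 0 := by push_cast; rw [h]; ring
    exact (ZMod.intCast_zmod_eq_zero_iff_dvd _ n).mp h0
  rcases hd with ⟨t, ht⟩
  rcases abs_lt.mp hab with ⟨h1, h2⟩
  have hn' : (0:ℤ) < n := by exact_mod_cast hn
  rcases lt_trichotomy t 0 with h' | h' | h'
  · have htle : t ≤ -1 := by omega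
    nlinarith
  · subst h'; simp at ht; omega
  · have htge : 1 ≤ t := h'
    nlinarith

lemma nu_spec {n : ℕ} (hn : 3 ≤ n) {k : ℤ} (h1 : -1 ≤ k) (h2 : k ≤ 1) :
    nu ((k : ZMod n)) = k := by
  have hn0 : 0 < n := by omega
  have hn3 : (3:ℤ) ≤ (n:ℤ) := by exact_mod_cast hn
  unfold nu
  split_ifs with ha hb
  · have : k = 1 := zcast_inj hn0 (by push_cast; exact_mod_cast ha) (by rw [abs_lt]; constructor <;> linarith)
    omega
  · have : k = -1 := zcast_inj hn0 (by push_cast; exact_mod_cast hb) (by rw [abs_lt]; constructor <;> linarith)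
    omega
  · have hne1 : k ≠ 1 := fun h => ha (by rw [h]; push_cast; ring)
    have hne2 : k ≠ -1 := fun h => hb (by rw [h]; push_cast; ring)
    omega

lemma rep_add {n : ℕ} (hn : 3 ≤ n) {lo hi : ℤ} (hb1 : 2*hi - lo < (n:ℤ)) (hb2 : hi - 2*lo < (n:ℤ))
    {x y : ZMod n} {kx ky kz : ℤ}
    (hkx1 : lo ≤ kx) (hkx2 : kx ≤ hi) (hky1 : lo ≤ ky) (hky2 : ky ≤ hi)
    (hkz1 : lo ≤ kz) (hkz2 : kz ≤ hi)
    (hx : x = (kx : ZMod n)) (hy : y = (ky : ZMod n)) (hz : x + y = (kz : ZMod n)) :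
    kz = kx + ky := by
  have hn0 : 0 < n := by omega
  apply zcast_inj hn0
  · rw [← hz, hx, hy]; push_cast; ring
  · rw [abs_lt]; constructor <;> linarith

lemma edgeVal_eq_nu {m n : ℕ} (φ : ZMod m → ZMod n) (c : ZMod m) :
    edgeVal φ c = nu (φ (c + 1) - φ c) := by
  unfold edgeVal nu
  have h1 : φ (c+1) - φ c = 1 ↔ φ (c+1) = φ c + 1 := sub_eq_iff_eq_add'
  have h2 : φ (c+1) - φ c = -1 ↔ φ (c+1) = φ c - 1 := by
    rw [sub_eq_iff_eq_add']
    constructor <;> intro h <;> rw [h] <;> ring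
  simp only [h1, h2]

lemma edge_val_eq {m n : ℕ} (hn : 3 ≤ n) {lo hi : ℤ} (hlo : -1 ≤ lo) (hhi : hi ≤ 1)
    (hb1 : 2*hi - lo < (n:ℤ)) (hb2 : hi - 2*lo < (n:ℤ))
    {fC : ZMod m → Orient} {fD : ZMod n → Orient}
    (harc : ∀ u v, cycRel fD u v → ∃ k : ℤ, lo ≤ k ∧ k ≤ hi ∧ v - u = (k : ZMod n))
    {φ ψ : ZMod m → ZMod n} (hφ : IsHom (cycRel fC) (cycRel fD) φ)
    (hψ : IsHom (cycRel fC) (cycRel fD) ψ)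
    (hA : HomArc (cycRel fC) (cycRel fD) φ ψ) (c : ZMod m) :
    edgeVal ψ c - edgeVal φ c = nu (ψ (c+1) - φ (c+1)) - nu (ψ c - φ c) := by
  obtain ⟨kP, hkP1, hkP2, hP⟩ := harc _ _ (hA c c (Or.inl rfl))
  obtain ⟨kQ, hkQ1, hkQ2, hQ⟩ := harc _ _ (hA (c+1) (c+1) (Or.inl rfl))
  rw [edgeVal_eq_nu, edgeVal_eq_nu, hP, hQ, nu_spec hn (le_trans hlo hkP1) (le_trans hkP2 hhi),
    nu_spec hn (le_trans hlo hkQ1) (le_trans hkQ2 hhi)]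
  have hedge : cycRel fC c (c+1) ∨ cycRel fC (c+1) c := by
    cases hOr : fC c with
    | plus => exact Or.inl (Or.inr (Or.inl ⟨rfl, by rw [hOr]; trivial⟩))
    | minus => exact Or.inr (Or.inr (Or.inr ⟨rfl, by rw [hOr]; trivial⟩))
    | star => exact Or.inl (Or.inr (Or.inl ⟨rfl, by rw [hOr]; trivial⟩))
  rcases hedge with h | h
  · obtain ⟨kB, hkB1, hkB2, hB⟩ := harc _ _ (hφ _ _ h)
    obtain ⟨kA, hkA1, hkA2, hAe⟩ := harc _ _ (hψ _ _ h)
    obtain ⟨kR, hkR1, hkR2, hR⟩ := harc _ _ (hA _ _ h)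
    have e1 : kR = kA + kP := by
      refine rep_add hn hb1 hb2 hkA1 hkA2 hkP1 hkP2 hkR1 hkR2 hAe hP ?_
      rw [← hR]; ring
    have e2 : kR = kB + kQ := by
      refine rep_add hn hb1 hb2 hkB1 hkB2 hkQ1 hkQ2 hkR1 hkR2 hB hQ ?_
      rw [← hR]; ring
    rw [hAe, hB, nu_spec hn (le_trans hlo hkA1) (le_trans hkA2 hhi),
      nu_spec hn (le_trans hlo hkB1) (le_trans hkB2 hhi)]
    omega
  · obtain ⟨kB, hkB1, hkB2, hB⟩ := harc _ _ (hφ _ _ h)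
    obtain ⟨kA, hkA1, hkA2, hAe⟩ := harc _ _ (hψ _ _ h)
    obtain ⟨kR, hkR1, hkR2, hR⟩ := harc _ _ (hA _ _ h)
    -- hB : φ c - φ (c+1) = kB, hAe : ψ c - ψ (c+1) = kA, hR : ψ c - φ (c+1) = kR
    have e1 : kR = kP + kB := by
      refine rep_add hn hb1 hb2 hkP1 hkP2 hkB1 hkB2 hkR1 hkR2 hP hB ?_
      rw [← hR]; ring
    have e2 : kR = kA + kQ := by
      refine rep_add hn hb1 hb2 hkA1 hkA2 hkQ1 hkQ2 hkR1 hkR2 hAe hQ ?_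
      rw [← hR]; ring
    have hA2 : ψ (c+1) - ψ c = ((-kA : ℤ) : ZMod n) := by
      have : ((-kA : ℤ) : ZMod n) = -((kA : ℤ) : ZMod n) := by push_cast; ring
      rw [this, ← hAe]; ring
    have hB2 : φ (c+1) - φ c = ((-kB : ℤ) : ZMod n) := by
      have : ((-kB : ℤ) : ZMod n) = -((kB : ℤ) : ZMod n) := by push_cast; ring
      rw [this, ← hB]; ring
    rw [hA2, hB2, nu_spec hn (by linarith) (by linarith),
      nu_spec hn (by linarith) (by linarith)]
    omega

lemma inc_eq_of_arc {m n : ℕ} (hn : 3 ≤ n) {lo hi : ℤ} (hlo : -1 ≤ lo) (hhi : hi ≤ 1)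
    (hb1 : 2*hi - lo < (n:ℤ)) (hb2 : hi - 2*lo < (n:ℤ))
    {fC : ZMod m → Orient} {fD : ZMod n → Orient}
    (harc : ∀ u v, cycRel fD u v → ∃ k : ℤ, lo ≤ k ∧ k ≤ hi ∧ v - u = (k : ZMod n))
    {φ ψ : ZMod m → ZMod n} (hφ : IsHom (cycRel fC) (cycRel fD) φ)
    (hψ : IsHom (cycRel fC) (cycRel fD) ψ)
    (hA : HomArc (cycRel fC) (cycRel fD) φ ψ) : increase φ = increase ψ := by
  have key := edge_val_eq hn hlo hhi hb1 hb2 harc hφ hψ hA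
  set d : ℕ → ℤ := fun j => nu (ψ ((j : ℕ) : ZMod m) - φ ((j : ℕ) : ZMod m)) with hd
  have h : increase ψ - increase φ = 0 := by
    unfold increase
    rw [← Finset.sum_sub_distrib]
    have hcong : ∀ j ∈ Finset.range m,
        edgeVal ψ ((j : ℕ) : ZMod m) - edgeVal φ ((j : ℕ) : ZMod m) = d (j+1) - d j := by
      intro j _
      have hcast : ((j : ℕ) : ZMod m) + 1 = (((j+1 : ℕ)) : ZMod m) := by push_cast; ring
      rw [key ((j : ℕ) : ZMod m), hd]
      simp only [hcast]
    rw [Finset.sum_congr rfl hcong, Finset.sum_range_sub]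
    have : ((m : ℕ) : ZMod m) = ((0 : ℕ) : ZMod m) := by simp
    rw [hd]
    simp only [this]
    ring
  linarith

lemma inc_eq_of_edge {m n : ℕ} (hn : 3 ≤ n) {lo hi : ℤ} (hlo : -1 ≤ lo) (hhi : hi ≤ 1)
    (hb1 : 2*hi - lo < (n:ℤ)) (hb2 : hi - 2*lo < (n:ℤ))
    {fC : ZMod m → Orient} {fD : ZMod n → Orient}
    (harc : ∀ u v, cycRel fD u v → ∃ k : ℤ, lo ≤ k ∧ k ≤ hi ∧ v - u = (k : ZMod n))
    {φ ψ : ZMod m → ZMod n} (hφ : IsHom (cycRel fC) (cycRel fD) φ)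
    (hψ : IsHom (cycRel fC) (cycRel fD) ψ)
    (hE : HomEdge (cycRel fC) (cycRel fD) φ ψ) : increase φ = increase ψ := by
  rcases hE with hA | hA
  · exact inc_eq_of_arc hn hlo hhi hb1 hb2 harc hφ hψ hA
  · exact (inc_eq_of_arc hn hlo hhi hb1 hb2 harc hψ hφ hA).symm

/-- For reflexive digraph cycles `C` and `D` with `D` non-contractible,
the wind (equivalently, the increase) of homomorphisms is constant over connected
components of `Hom(C,D)`. -/
theorem wind_constant_on_components (m n : ℕ) (hm : 3 ≤ m)
    (fC : ZMod m → Orient) (fD : ZMod n → Orient) (hD : NonContractible fD)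
    (φ ψ : ZMod m → ZMod n)
    (hφ : IsHom (cycRel fC) (cycRel fD) φ) (hψ : IsHom (cycRel fC) (cycRel fD) ψ)
    (hconn : Relation.ReflTransGen
      (fun a b => IsHom (cycRel fC) (cycRel fD) a ∧ IsHom (cycRel fC) (cycRel fD) b ∧
        HomEdge (cycRel fC) (cycRel fD) a b) φ ψ) :
    increase φ = increase ψ := by
  obtain ⟨lo, hi, hn, hlo, hhi, hb1, hb2, harc⟩ :
      ∃ (lo hi : ℤ), 3 ≤ n ∧ -1 ≤ lo ∧ hi ≤ 1 ∧ 2*hi - lo < (n:ℤ) ∧ hi - 2*lo < (n:ℤ) ∧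
        ∀ u v, cycRel fD u v → ∃ k : ℤ, lo ≤ k ∧ k ≤ hi ∧ v - u = (k : ZMod n) := by
    rcases hD with h4 | ⟨h3, hdir⟩
    · refine ⟨-1, 1, by omega, le_refl _, le_refl _, ?_, ?_, ?_⟩
      · have : (4:ℤ) ≤ (n:ℤ) := by exact_mod_cast h4
        linarith
      · have : (4:ℤ) ≤ (n:ℤ) := by exact_mod_cast h4
        linarith
      · rintro u v (h | ⟨h, _⟩ | ⟨h, _⟩)
        · exact ⟨0, by norm_num, by norm_num, by rw [h]; push_cast; ring⟩
        · exact ⟨1, by norm_num, by norm_num, by rw [h]; push_cast; ring⟩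
        · exact ⟨-1, by norm_num, by norm_num, by rw [h]; push_cast; ring⟩
    · rcases hdir with hp | hmn
      · refine ⟨0, 1, by omega, by norm_num, le_refl _, ?_, ?_, ?_⟩
        · rw [h3]; norm_num
        · rw [h3]; norm_num
        · rintro u v (h | ⟨h, _⟩ | ⟨h, hb⟩)
          · exact ⟨0, by norm_num, by norm_num, by rw [h]; push_cast; ring⟩
          · exact ⟨1, by norm_num, by norm_num, by rw [h]; push_cast; ring⟩
          · rw [hp v] at hb; exact absurd hb (by simp [Orient.bwd])
      · refine ⟨-1, 0, by omega, le_refl _, by norm_num, ?_, ?_, ?_⟩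
        · rw [h3]; norm_num
        · rw [h3]; norm_num
        · rintro u v (h | ⟨h, hf⟩ | ⟨h, _⟩)
          · exact ⟨0, by norm_num, by norm_num, by rw [h]; push_cast; ring⟩
          · rw [hmn u] at hf; exact absurd hf (by simp [Orient.fwd])
          · exact ⟨-1, by norm_num, by norm_num, by rw [h]; push_cast; ring⟩
  induction hconn with
  | refl => rfl
  | tail hab hbc ih =>
    obtain ⟨hb, hc, he⟩ := hbc
    exact (ih hb).trans (inc_eq_of_edge hn hlo hhi hb1 hb2 harc hb hc he)


end Recon
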